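/- The set of complex roots of polynomials f(n) = Σ_{i=0}^3 δ_i binom(n+3-i,3) with δ = (1,b,b,1), b ranging over nonnegative reals, together with the roots of the SSNN polynomial with δ = (0,1,1,0), equals [-1,0] ∪ { α ∈ ℂ : Re(α) = -1/2, 0 < |Im(α)| ≤ √23/2 }. -/

import Mathlib

/-- Polynomial binomial coefficient `binom(x, k) = x(x-1)⋯(x-k+1)/k!` in a complex variable. -/
noncomputable def cbinom (x : ℂ) (k : ℕ) : ℂ :=
  (∏ j ∈ Finset.range k, (x - (j : ℂ))) / (k.factorial : ℂ)

lemma cbinom_three (x : ℂ) : cbinom x 3 = x * (x - 1) * (x - 2) / 6 := by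
  simp [cbinom, Finset.prod_range_succ, Nat.factorial]

theorem stmt7 :
    {α : ℂ | (∃ b : ℝ, 0 ≤ b ∧
          cbinom (α + 3) 3 + (b : ℂ) * cbinom (α + 2) 3 + (b : ℂ) * cbinom (α + 1) 3 +
              cbinom α 3 = 0) ∨
        cbinom (α + 2) 3 + cbinom (α + 1) 3 = 0} =
      {α : ℂ | α.im = 0 ∧ -1 ≤ α.re ∧ α.re ≤ 0} ∪
        {α : ℂ | α.re = -(1 / 2) ∧ 0 < |α.im| ∧ |α.im| ≤ Real.sqrt 23 / 2} := by
  have h6 : (6:ℂ) ≠ 0 := by norm_num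
  have e1 : ∀ (α : ℂ) (b : ℝ),
      (cbinom (α + 3) 3 + (b : ℂ) * cbinom (α + 2) 3 + (b : ℂ) * cbinom (α + 1) 3 +
          cbinom α 3 = 0) ↔ (2*α+1 = 0 ∨ (1+(b:ℂ))*(α^2+α) + 6 = 0) := by
    intro α b
    rw [cbinom_three, cbinom_three, cbinom_three, cbinom_three,
      show (α+3)*(α+3-1)*(α+3-2)/6 + (b:ℂ)*((α+2)*(α+2-1)*(α+2-2)/6)
          + (b:ℂ)*((α+1)*(α+1-1)*(α+1-2)/6) + α*(α-1)*(α-2)/6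
        = ((2*α+1)*((1+(b:ℂ))*(α^2+α)+6))/6 by ring,
      div_eq_zero_iff, or_iff_left h6, mul_eq_zero]
  have e2 : ∀ (α : ℂ),
      (cbinom (α + 2) 3 + cbinom (α + 1) 3 = 0) ↔ (2*α+1) * (α^2+α) = 0 := by
    intro α
    rw [cbinom_three, cbinom_three,
      show (α+2)*(α+2-1)*(α+2-2)/6 + (α+1)*(α+1-1)*(α+1-2)/6
        = ((2*α+1)*(α^2+α))/6 by ring,
      div_eq_zero_iff, or_iff_left h6]
  ext α
  simp only [Set.mem_setOf_eq, Set.mem_union, e1, e2]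
  constructor
  · rintro (⟨b, hb, hα | h⟩ | h)
    · left
      have : α = -(1/2 : ℂ) := by linear_combination hα / 2
      subst this
      norm_num
    · -- (1+b)(α²+α)+6 = 0
      have hre := congrArg Complex.re h
      have him := congrArg Complex.im h
      simp only [Complex.add_re, Complex.add_im, Complex.mul_re, Complex.mul_im,
        Complex.ofReal_re, Complex.ofReal_im, Complex.one_re, Complex.one_im,
        Complex.zero_re, Complex.zero_im, pow_two] at hre him
      norm_num at hre him
      set x := α.re with hx
      set y := α.im with hy
      have hb1 : (0:ℝ) < 1 + b := by linarith
      -- him should give (1+b)*(2xy+y)=0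
      have him' : y * (2*x + 1) = 0 := by
        rcases him with h' | h'
        · exact absurd h' (by linarith)
        · linear_combination h'
      have hyx : y = 0 ∨ 2*x + 1 = 0 := mul_eq_zero.mp him'
      rcases hyx with h0 | h0
      · -- y = 0, real root in (-1,0)
        left
        have hre' : (1+b) * (x*x + x) + 6 = 0 := by
          rw [h0] at hre
          linear_combination hre
        have ht : x*x + x < 0 := by
          by_contra hcon
          push_neg at hcon
          nlinarith [mul_nonneg (le_of_lt hb1) hcon]
        exact ⟨h0, by nlinarith [sq_nonneg (x+1)], by nlinarith [sq_nonneg x]⟩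
      · -- 2x+1 = 0
        have hx2 : x = -(1/2) := by linarith
        have hre' : (1+b) * (-(1/4) - y*y) + 6 = 0 := by
          rw [hx2] at hre
          linear_combination hre
        by_cases hy0 : y = 0
        · left
          exact ⟨hy0, by linarith, by linarith⟩
        · right
          refine ⟨hx2, abs_pos.mpr hy0, ?_⟩
          have hy2 : y*y ≤ 23/4 := by
            nlinarith [mul_nonneg hb (mul_self_nonneg y)]
          nlinarith [Real.sq_sqrt (show (0:ℝ) ≤ 23 by norm_num), Real.sqrt_nonneg 23,
            sq_abs y, abs_nonneg y]
    · rcases mul_eq_zero.mp h with h' | h'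
      · left
        have : α = -(1/2 : ℂ) := by linear_combination h' / 2
        subst this; norm_num
      · have : α * (α + 1) = 0 := by linear_combination h'
        rcases mul_eq_zero.mp this with h'' | h''
        · subst h''; left; norm_num
        · have : α = -1 := by linear_combination h''
          subst this; left; norm_num
  · rintro (⟨hy, hx1, hx2⟩ | ⟨hre, hy0, hy23⟩)
    · -- real case
      set x := α.re with hxd
      have hα : α = (x : ℂ) := by
        apply Complex.ext <;> simp [hy, hxd]
      by_cases hc : x*x + x = 0
      · right
        rw [hα]
        have : ((x:ℂ))^2 + (x:ℂ) = ((x*x + x : ℝ) : ℂ) := by push_cast; ring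
        rw [this, hc]
        simp
      · left
        have htle : x*x + x ≤ 0 := by nlinarith
        have ht : x*x + x < 0 := lt_of_le_of_ne htle hc
        have htge : -(1/4 : ℝ) ≤ x*x + x := by nlinarith [sq_nonneg (x + 1/2)]
        refine ⟨-(6 / (x*x+x)) - 1, ?_, Or.inr ?_⟩
        · have h1 : (1:ℝ) ≤ -(6 / (x*x+x)) := by
            rw [← div_neg, le_div_iff₀ (by linarith)]
            linarith
          linarith
        · have hr : (1 + (-(6 / (x*x+x)) - 1)) * (x^2 + x) + 6 = (0:ℝ) := by
            linear_combination -(div_mul_cancel₀ (6:ℝ) hc)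
          rw [hα]
          exact_mod_cast hr
    · -- complex case on critical line
      set y := α.im with hyd
      have hα : α = (-(1/2) : ℂ) + (y:ℝ) * Complex.I := by
        apply Complex.ext <;> simp [hre, hyd]
      have hy2 : y^2 ≤ 23/4 := by
        nlinarith [Real.sq_sqrt (show (0:ℝ) ≤ 23 by norm_num), Real.sqrt_nonneg 23,
          sq_abs y, abs_nonneg y, mul_self_le_mul_self (abs_nonneg y) hy23]
      have hu : (0:ℝ) < 1/4 + y^2 := by positivity
      refine Or.inl ⟨6 / (1/4 + y^2) - 1, ?_, Or.inr ?_⟩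
      · have h1 : (1:ℝ) ≤ 6 / (1/4 + y^2) := by
          rw [le_div_iff₀ hu]
          linarith
        linarith
      · have hs : α^2 + α = ((-(1/4) - y^2 : ℝ) : ℂ) := by
          rw [hα]
          push_cast
          linear_combination (y:ℂ)^2 * Complex.I_sq
        have hr : (1 + (6 / (1/4 + y^2) - 1)) * (-(1/4) - y^2) + 6 = (0:ℝ) := by
          have := hu.ne'
          field_simp
          ring
        rw [hs]
        exact_mod_cast hr
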